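/- The map sending a binary tree T of size n to the equivalence class of the partial order ⊲_T is a bijection from the set of binary trees with n vertices to the set of equivalence classes of adapted partial orders to Λₙ. In particular, the number of quasi-hereditary structures on Λₙ equals the n-th Catalan number Cₙ = (1/(n+1))·binom(2n, n). -/

import Mathlib

/-!
STATEMENT 5.  The map sending a binary tree `T` of size `n` to the equivalence class of the
adapted order `⊲_T` is a bijection between binary trees with `n` vertices and equivalence
classes of adapted orders to `Λₙ` (the path algebra of `1 → ⋯ → n`), so the number of
quasi-hereditary structures on `Λₙ` is the `n`-th Catalan number.

`Λₙ` is the incidence algebra of the chain: adaptedness, the decreasing relation `Dec(⊲)`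
(composition factors of standard modules) and the increasing relation `Inc(⊲)` (composition
factors of costandard modules) are given by the interval characterizations below, and two
adapted orders are equivalent (same standard and costandard modules) iff they have the same
`Dec` and `Inc` relations.
-/

section
variable {V : Type*} (le : V → V → Prop)

/-- Adaptedness of `⊲` with respect to the order `le` (the interval criterion). -/
def AdaptedG (lhd : V → V → Prop) : Prop :=
  ∀ i j : V, le i j → ¬ lhd i j → ¬ lhd j i →
    ∃ k : V, le i k ∧ le k j ∧ lhd i k ∧ lhd j k

/-- `(x, y) ∈ Dec(⊲)`: `S(x)` is a composition factor of the standard module `Δ(y)`. -/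
def DecRelG (lhd : V → V → Prop) (x y : V) : Prop :=
  le y x ∧ ∀ k : V, le y k → le k x → lhd k y

/-- `(x, y) ∈ Inc(⊲)`: `S(x)` is a composition factor of the costandard module `∇(y)`. -/
def IncRelG (lhd : V → V → Prop) (x y : V) : Prop :=
  le x y ∧ ∀ k : V, le x k → le k y → lhd k y

/-- Equivalence of adapted orders: equal standard and costandard modules. -/
def QHEquivG (lhd₁ lhd₂ : V → V → Prop) : Prop :=
  (∀ x y, DecRelG le lhd₁ x y ↔ DecRelG le lhd₂ x y) ∧
  (∀ x y, IncRelG le lhd₁ x y ↔ IncRelG le lhd₂ x y)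

end

/-- Binary trees: either empty, or a root with a left and a right subtree. -/
inductive BTree : Type
  | nil : BTree
  | node : BTree → BTree → BTree

/-- Number of vertices of a binary tree. -/
def BTree.size : BTree → ℕ
  | .nil => 0
  | .node l r => l.size + 1 + r.size

/-- The relation `⊲_T` on in-order (0-based) labels. -/
def BTree.rel : BTree → ℕ → ℕ → Prop
  | .nil, _, _ => False
  | .node l r, i, j =>
      (j = l.size ∧ i < l.size + 1 + r.size) ∨
      l.rel i j ∨
      (l.size < i ∧ l.size < j ∧ r.rel (i - (l.size + 1)) (j - (l.size + 1)))

namespace BTree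

/-- Lowest in-order label in the subtree rooted at label `j`. -/
def lo : BTree → ℕ → ℕ
  | .nil, _ => 0
  | .node l r, j =>
    if j < l.size then l.lo j
    else if j = l.size then 0
    else l.size + 1 + r.lo (j - (l.size + 1))

/-- Highest in-order label in the subtree rooted at label `j`. -/
def hi : BTree → ℕ → ℕ
  | .nil, _ => 0
  | .node l r, j =>
    if j < l.size then l.hi j
    else if j = l.size then l.size + r.size
    else l.size + 1 + r.hi (j - (l.size + 1))

theorem lo_le : ∀ (T : BTree) (j : ℕ), j < T.size → T.lo j ≤ j
  | .nil, j, h => by simp [size] at h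
  | .node l r, j, h => by
    unfold lo
    split
    · exact le_trans (lo_le l j ‹_›) le_rfl
    · split
      · omega
      · have h1 : l.size < j := by omega
        have h2 : j - (l.size + 1) < r.size := by simp [size] at h; omega
        have := lo_le r (j - (l.size + 1)) h2
        omega

theorem le_hi : ∀ (T : BTree) (j : ℕ), j < T.size → j ≤ T.hi j
  | .nil, j, h => by simp [size] at h
  | .node l r, j, h => by
    unfold hi
    split
    · exact le_hi l j ‹_›
    · split
      · omega
      · have h1 : l.size < j := by omega
        have h2 : j - (l.size + 1) < r.size := by simp [size] at h; omega
        have := le_hi r (j - (l.size + 1)) h2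
        omega

theorem hi_lt : ∀ (T : BTree) (j : ℕ), j < T.size → T.hi j < T.size
  | .nil, j, h => by simp [size] at h
  | .node l r, j, h => by
    unfold hi
    simp only [size]
    split
    · have := hi_lt l j ‹_›; omega
    · split
      · omega
      · have h1 : l.size < j := by omega
        have h2 : j - (l.size + 1) < r.size := by simp [size] at h; omega
        have := hi_lt r (j - (l.size + 1)) h2
        omega

theorem rel_lt : ∀ (T : BTree) (i j : ℕ), T.rel i j → i < T.size ∧ j < T.size
  | .nil, i, j, h => h.elim
  | .node l r, i, j, h => by
    simp only [size]
    rcases h with ⟨rfl, hi⟩ | h | ⟨h1, h2, h3⟩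
    · omega
    · have := rel_lt l i j h; omega
    · have := rel_lt r _ _ h3; omega

theorem hi_root (l r : BTree) : (BTree.node l r).hi l.size = l.size + r.size := by
  simp [hi]

theorem lo_root (l r : BTree) : (BTree.node l r).lo l.size = 0 := by
  simp [lo]

theorem hi_left (l r : BTree) (j : ℕ) (h : j < l.size) :
    (BTree.node l r).hi j = l.hi j := by
  simp only [hi, if_pos h]

theorem lo_left (l r : BTree) (j : ℕ) (h : j < l.size) :
    (BTree.node l r).lo j = l.lo j := by
  simp only [lo, if_pos h]

theorem hi_right (l r : BTree) (j : ℕ) (h : l.size < j) :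
    (BTree.node l r).hi j = l.size + 1 + r.hi (j - (l.size + 1)) := by
  simp only [hi, if_neg (show ¬ j < l.size by omega), if_neg (show ¬ j = l.size by omega)]

theorem lo_right (l r : BTree) (j : ℕ) (h : l.size < j) :
    (BTree.node l r).lo j = l.size + 1 + r.lo (j - (l.size + 1)) := by
  simp only [lo, if_neg (show ¬ j < l.size by omega), if_neg (show ¬ j = l.size by omega)]

theorem rel_iff : ∀ (T : BTree) (i j : ℕ), j < T.size →
    (T.rel i j ↔ T.lo j ≤ i ∧ i ≤ T.hi j)
  | .nil, i, j, h => by simp [size] at h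
  | .node l r, i, j, h => by
    simp only [size] at h
    unfold rel lo hi
    rcases lt_trichotomy j l.size with hj | hj | hj
    · simp only [if_pos hj]
      rw [rel_iff l i j hj]
      have hl := hi_lt l j hj
      constructor
      · rintro (⟨rfl, _⟩ | h | ⟨h1, h2, h3⟩)
        · omega
        · exact h
        · omega
      · intro hb; right; left; exact hb
    · simp only [if_neg (show ¬ j < l.size by omega), if_pos hj]
      constructor
      · rintro (⟨rfl, hlt⟩ | h | ⟨h1, h2, h3⟩)
        · omega
        · have := rel_lt l i j h; omega
        · omega
      · intro hb; left; exact ⟨hj, by omega⟩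
    · simp only [if_neg (show ¬ j < l.size by omega), if_neg (show ¬ j = l.size by omega)]
      have hj2 : j - (l.size + 1) < r.size := by omega
      rw [rel_iff r _ _ hj2]
      have hlo := lo_le r _ hj2
      have hhi := le_hi r _ hj2
      constructor
      · rintro (⟨rfl, _⟩ | h | ⟨h1, h2, h3⟩)
        · omega
        · have := rel_lt l i j h; omega
        · omega
      · intro hb
        right; right
        refine ⟨by omega, hj, by omega, by omega⟩

theorem rel_refl (T : BTree) (j : ℕ) (h : j < T.size) : T.rel j j := by
  rw [rel_iff T j j h]
  exact ⟨lo_le T j h, le_hi T j h⟩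

/-- Nesting of spans. -/
theorem span_subset : ∀ (T : BTree) (j k : ℕ), k < T.size → T.lo k ≤ j → j ≤ T.hi k →
    T.lo k ≤ T.lo j ∧ T.hi j ≤ T.hi k
  | .nil, j, k, h, _, _ => by simp [size] at h
  | .node l r, j, k, hk, h1, h2 => by
    simp only [size] at hk
    unfold lo hi at *
    rcases lt_trichotomy k l.size with hkl | hkl | hkl
    · simp only [if_pos hkl] at h1 h2 ⊢
      have hjl : j < l.size := lt_of_le_of_lt h2 (hi_lt l k hkl)
      simp only [if_pos hjl]
      exact span_subset l j k hkl h1 h2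
    · simp only [if_neg (show ¬ k < l.size by omega), if_pos hkl] at h1 h2 ⊢
      rcases lt_trichotomy j l.size with hjl | hjl | hjl
      · simp only [if_pos hjl]
        have := hi_lt l j hjl
        omega
      · simp only [if_neg (show ¬ j < l.size by omega), if_pos hjl]
        omega
      · simp only [if_neg (show ¬ j < l.size by omega), if_neg (show ¬ j = l.size by omega)]
        have hj2 : j - (l.size + 1) < r.size := by omega
        have := hi_lt r _ hj2
        have := lo_le r _ hj2
        omega
    · simp only [if_neg (show ¬ k < l.size by omega), if_neg (show ¬ k = l.size by omega)]
        at h1 h2 ⊢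
      have hk2 : k - (l.size + 1) < r.size := by omega
      have hjl : l.size < j := by
        have := lo_le r _ hk2
        omega
      simp only [if_neg (show ¬ j < l.size by omega), if_neg (show ¬ j = l.size by omega)]
      have := span_subset r (j - (l.size + 1)) (k - (l.size + 1)) hk2 (by omega) (by omega)
      omega

theorem rel_trans (T : BTree) (i j k : ℕ) (h1 : T.rel i j) (h2 : T.rel j k) : T.rel i k := by
  have hj := (rel_lt T i j h1).2
  have hk := (rel_lt T j k h2).2
  rw [rel_iff T i j hj] at h1
  rw [rel_iff T j k hk] at h2
  rw [rel_iff T i k hk]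
  have := span_subset T j k hk h2.1 h2.2
  omega

theorem rel_antisymm : ∀ (T : BTree) (i j : ℕ), T.rel i j → T.rel j i → i = j
  | .nil, _, _, h, _ => h.elim
  | .node l r, i, j, h1, h2 => by
    rcases h1 with ⟨rfl, _⟩ | h1 | ⟨ha, hb, hc⟩
    · rcases h2 with ⟨rfl, _⟩ | h2 | ⟨ha, hb, hc⟩
      · rfl
      · have := rel_lt l _ _ h2; omega
      · omega
    · rcases h2 with ⟨rfl, _⟩ | h2 | ⟨ha, hb, hc⟩
      · have := rel_lt l _ _ h1; omega
      · exact rel_antisymm l i j h1 h2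
      · have := rel_lt l _ _ h1; omega
    · rcases h2 with ⟨rfl, _⟩ | h2 | ⟨ha', hb', hc'⟩
      · omega
      · have := rel_lt l _ _ h2; omega
      · have := rel_antisymm r _ _ hc hc'; omega

theorem rel_adapted : ∀ (T : BTree) (i j : ℕ), i ≤ j → j < T.size →
    ¬ T.rel i j → ¬ T.rel j i → ∃ k, i ≤ k ∧ k ≤ j ∧ T.rel i k ∧ T.rel j k
  | .nil, i, j, _, hj, _, _ => by simp [size] at hj
  | .node l r, i, j, hij, hj, hn1, hn2 => by
    simp only [size] at hj
    rcases lt_trichotomy j l.size with hjl | hjl | hjl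
    · -- both in left subtree
      have hil : i < l.size := lt_of_le_of_lt hij hjl
      have hn1' : ¬ l.rel i j := fun h => hn1 (Or.inr (Or.inl h))
      have hn2' : ¬ l.rel j i := fun h => hn2 (Or.inr (Or.inl h))
      obtain ⟨k, hk1, hk2, hk3, hk4⟩ := rel_adapted l i j hij hjl hn1' hn2'
      exact ⟨k, hk1, hk2, Or.inr (Or.inl hk3), Or.inr (Or.inl hk4)⟩
    · exact absurd (Or.inl ⟨hjl, by omega⟩) hn1
    · rcases lt_trichotomy i l.size with hil | hil | hil
      · -- i left, j right: root works
        refine ⟨l.size, by omega, by omega, ?_, ?_⟩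
        · exact Or.inl ⟨rfl, by omega⟩
        · exact Or.inl ⟨rfl, by omega⟩
      · exact absurd (Or.inl ⟨hil, by omega⟩) hn2
      · have hj2 : j - (l.size + 1) < r.size := by omega
        have hn1' : ¬ r.rel (i - (l.size + 1)) (j - (l.size + 1)) :=
          fun h => hn1 (Or.inr (Or.inr ⟨hil, hjl, h⟩))
        have hn2' : ¬ r.rel (j - (l.size + 1)) (i - (l.size + 1)) :=
          fun h => hn2 (Or.inr (Or.inr ⟨hjl, hil, h⟩))
        obtain ⟨k, hk1, hk2, hk3, hk4⟩ :=
          rel_adapted r _ _ (by omega) hj2 hn1' hn2'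
        refine ⟨l.size + 1 + k, by omega, by omega, ?_, ?_⟩
        · exact Or.inr (Or.inr ⟨by omega, by omega, by
            have : l.size + 1 + k - (l.size + 1) = k := by omega
            rw [this]; exact hk3⟩)
        · exact Or.inr (Or.inr ⟨by omega, by omega, by
            have : l.size + 1 + k - (l.size + 1) = k := by omega
            rw [this]; exact hk4⟩)

theorem eq_of_spans : ∀ (T T' : BTree), T.size = T'.size →
    (∀ j < T.size, T.lo j = T'.lo j ∧ T.hi j = T'.hi j) → T = T'
  | .nil, .nil, _, _ => rfl
  | .nil, .node l' r', hs, _ => by simp only [size] at hs; omega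
  | .node l r, .nil, hs, _ => by simp only [size] at hs; omega
  | .node l r, .node l' r', hs, hsp => by
    simp only [size] at hs
    have hroot : l.size = l'.size := by
      by_contra hne
      rcases lt_or_gt_of_ne hne with hlt | hlt
      · have h1 := (hsp l.size (by simp only [size]; omega)).2
        rw [hi_root, hi_left l' r' l.size hlt] at h1
        have := hi_lt l' l.size hlt
        omega
      · have h1 := (hsp l.size (by simp only [size]; omega)).1
        rw [lo_root, lo_right l' r' l.size hlt] at h1
        omega
    have hr : r.size = r'.size := by omega
    have hleft : l = l' := by
      apply eq_of_spans l l' (by omega)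
      intro j hjl
      have h := hsp j (by simp only [size]; omega)
      rw [lo_left l r j hjl, hi_left l r j hjl,
        lo_left l' r' j (by omega), hi_left l' r' j (by omega)] at h
      exact h
    have hright : r = r' := by
      apply eq_of_spans r r' hr
      intro j hjr
      have h := hsp (l.size + 1 + j) (by simp only [size]; omega)
      rw [lo_right l r _ (by omega), hi_right l r _ (by omega),
        lo_right l' r' _ (by omega), hi_right l' r' _ (by omega)] at h
      have he : l.size + 1 + j - (l.size + 1) = j := by omega
      rw [he, ← hroot, he] at h
      omega
    rw [hleft, hright]

end BTree
section Build

/-- An element `m` of `[a,b]` dominating all of `[a,b]` w.r.t. `L`, chosen classically;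
falls back to `a` when none exists. -/
noncomputable def topEl (L : ℕ → ℕ → Prop) (a b : ℕ) : ℕ :=
  letI := Classical.propDecidable
  if h : ∃ m, a ≤ m ∧ m ≤ b ∧ ∀ k, a ≤ k → k ≤ b → L k m then h.choose else a

theorem topEl_ge (L : ℕ → ℕ → Prop) (a b : ℕ) : a ≤ topEl L a b := by
  unfold topEl
  split
  · next h => exact h.choose_spec.1
  · next => exact le_rfl

theorem topEl_le (L : ℕ → ℕ → Prop) (a b : ℕ) (h : a ≤ b) : topEl L a b ≤ b := by
  unfold topEl
  split
  · next hh => exact hh.choose_spec.2.1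
  · next => exact h

theorem topEl_spec (L : ℕ → ℕ → Prop) (a b : ℕ)
    (h : ∃ m, a ≤ m ∧ m ≤ b ∧ ∀ k, a ≤ k → k ≤ b → L k m) :
    ∀ k, a ≤ k → k ≤ b → L k (topEl L a b) := by
  unfold topEl
  rw [dif_pos h]
  exact h.choose_spec.2.2

/-- Build the binary tree of an adapted order on the interval `[a, a+len-1]`. -/
noncomputable def build (L : ℕ → ℕ → Prop) : ℕ → ℕ → BTree
  | _, 0 => .nil
  | a, len + 1 =>
      .node (build L a (topEl L a (a + len) - a))
            (build L (topEl L a (a + len) + 1) (a + len - topEl L a (a + len)))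
  termination_by a len => len
  decreasing_by
  · have h1 := topEl_ge L a (a + len)
    have h2 := topEl_le L a (a + len) (by omega)
    omega
  · have h1 := topEl_ge L a (a + len)
    omega

theorem build_size (L : ℕ → ℕ → Prop) (len a : ℕ) : (build L a len).size = len := by
  induction len using Nat.strong_induction_on generalizing a with
  | _ len ih =>
    match len with
    | 0 => rw [build]; rfl
    | len + 1 =>
      rw [build]
      have h1 := topEl_ge L a (a + len)
      have h2 := topEl_le L a (a + len) (by omega)
      simp only [BTree.size,
        ih (topEl L a (a + len) - a) (by omega) a,
        ih (a + len - topEl L a (a + len)) (by omega) (topEl L a (a + len) + 1)]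
      omega

variable {n : ℕ} {L : ℕ → ℕ → Prop}
  (hrefl : ∀ i, i < n → L i i)
  (hanti : ∀ i j, L i j → L j i → i = j)
  (htrans : ∀ i j k, L i j → L j k → L i k)
  (hbdd : ∀ i j, L i j → i < n ∧ j < n)
  (hadapted : ∀ i j, i ≤ j → j < n → ¬ L i j → ¬ L j i →
    ∃ k, i ≤ k ∧ k ≤ j ∧ L i k ∧ L j k)

include hrefl hanti htrans hbdd hadapted

theorem top_exists : ∀ (d a : ℕ), a + d < n →
    ∃ m, a ≤ m ∧ m ≤ a + d ∧ ∀ k, a ≤ k → k ≤ a + d → L k m := by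
  intro d
  induction d with
  | zero =>
    intro a ha
    exact ⟨a, le_rfl, by omega, fun k hk1 hk2 => by
      have : k = a := by omega
      rw [this]; exact hrefl a (by omega)⟩
  | succ d ih =>
    intro a ha
    obtain ⟨m, hm1, hm2, hm3⟩ := ih a (by omega)
    by_cases hc1 : L (a + (d + 1)) m
    · exact ⟨m, hm1, by omega, fun k hk1 hk2 => by
        rcases Nat.lt_or_ge k (a + (d + 1)) with h | h
        · exact hm3 k hk1 (by omega)
        · have : k = a + (d + 1) := by omega
          rw [this]; exact hc1⟩
    · by_cases hc2 : L m (a + (d + 1))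
      · refine ⟨a + (d + 1), by omega, le_rfl, fun k hk1 hk2 => ?_⟩
        rcases Nat.lt_or_ge k (a + (d + 1)) with h | h
        · exact htrans _ _ _ (hm3 k hk1 (by omega)) hc2
        · have : k = a + (d + 1) := by omega
          rw [this]; exact hrefl _ ha
      · obtain ⟨k₀, hk1, hk2, hk3, hk4⟩ := hadapted m (a + (d + 1)) (by omega) ha hc2 hc1
        refine ⟨k₀, by omega, hk2, fun k hka hkb => ?_⟩
        rcases Nat.lt_or_ge k (a + (d + 1)) with h | h
        · exact htrans _ _ _ (hm3 k hka (by omega)) hk3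
        · have : k = a + (d + 1) := by omega
          rw [this]; exact hk4

/-- The main lemma: on an interval `[a, a+len-1]` satisfying the boundary invariant,
the `Dec`/`Inc` sets of the adapted order are the spans of the constructed tree. -/
theorem build_spans : ∀ (len a : ℕ), a + len ≤ n →
    (∀ k, a ≤ k → k < a + len → (0 < a → L k (a - 1)) ∧ (a + len < n → L k (a + len))) →
    ∀ j, j < len →
      (∀ x, (a + j ≤ x ∧ ∀ k, a + j ≤ k → k ≤ x → L k (a + j)) ↔
        (a + j ≤ x ∧ x ≤ a + (build L a len).hi j)) ∧
      (∀ x, (x ≤ a + j ∧ ∀ k, x ≤ k → k ≤ a + j → L k (a + j)) ↔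
        (a + (build L a len).lo j ≤ x ∧ x ≤ a + j)) := by
  intro len
  induction len using Nat.strong_induction_on with
  | _ len ih =>
  match len with
  | 0 => intro a _ _ j hj; omega
  | len' + 1 =>
    intro a hn hinv j hj
    set m := topEl L a (a + len') with hm
    have hm1 : a ≤ m := topEl_ge L a (a + len')
    have hm2 : m ≤ a + len' := topEl_le L a (a + len') (by omega)
    have htop : ∀ k, a ≤ k → k ≤ a + len' → L k m :=
      topEl_spec L a (a + len')
        (top_exists hrefl hanti htrans hbdd hadapted len' a (by omega))
    have hbuild : build L a (len' + 1) =
        .node (build L a (m - a)) (build L (m + 1) (a + len' - m)) := by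
      rw [build, ← hm]
    have hsl : (build L a (m - a)).size = m - a := build_size L _ _
    have hsr : (build L (m + 1) (a + len' - m)).size = a + len' - m := build_size L _ _
    rw [hbuild]
    simp only [BTree.hi, BTree.lo, hsl, hsr]
    rcases lt_trichotomy j (m - a) with hjm | hjm | hjm
    · -- j in left subtree
      have hrec := ih (m - a) (by omega) a (by omega)
        (fun k hk1 hk2 => ⟨fun h0 => (hinv k hk1 (by omega)).1 h0,
          fun _ => by
            have e : a + (m - a) = m := by omega
            rw [e]
            exact htop k hk1 (by omega)⟩) j hjm
      simp only [if_pos hjm]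
      exact hrec
    · -- j is the root
      simp only [if_neg (show ¬ j < m - a by omega), if_pos hjm]
      have e : a + j = m := by omega
      rw [e]
      constructor
      · intro x
        constructor
        · rintro ⟨h1, h2⟩
          refine ⟨h1, ?_⟩
          by_contra hx
          push_neg at hx
          have hk : L (a + len' + 1) m := h2 _ (by omega) (by omega)
          by_cases hlt : a + (len' + 1) < n
          · have h3 : L m (a + (len' + 1)) := (hinv m hm1 (by omega)).2 hlt
            have := hanti _ _ hk h3
            omega
          · have := (hbdd _ _ hk).1
            omega
        · rintro ⟨h1, h2⟩
          exact ⟨h1, fun k hk1 hk2 => htop k (by omega) (by omega)⟩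
      · intro x
        constructor
        · rintro ⟨h1, h2⟩
          refine ⟨?_, h1⟩
          by_contra hx
          push_neg at hx
          have hk : L (a - 1) m := h2 _ (by omega) (by omega)
          have h3 : L m (a - 1) := (hinv m hm1 (by omega)).1 (by omega)
          have := hanti _ _ hk h3
          omega
        · rintro ⟨h1, h2⟩
          exact ⟨h2, fun k hk1 hk2 => htop k (by omega) (by omega)⟩
    · -- j in right subtree
      have hj' : j - (m - a + 1) < a + len' - m := by omega
      have hrec := ih (a + len' - m) (by omega) (m + 1) (by omega)
        (fun k hk1 hk2 => by
          refine ⟨fun _ => ?_, fun hlt => ?_⟩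
          · have e5 : m + 1 - 1 = m := by omega
            rw [e5]
            exact htop k (by omega) (by omega)
          · have e4 : m + 1 + (a + len' - m) = a + (len' + 1) := by omega
            rw [e4] at hlt ⊢
            exact (hinv k (by omega) (by omega)).2 hlt)
        (j - (m - a + 1)) hj'
      simp only [if_neg (show ¬ j < m - a by omega), if_neg (show ¬ j = m - a by omega)]
      have e6 : a + j = m + 1 + (j - (m - a + 1)) := by omega
      have e7 : ∀ t : ℕ, a + (m - a + 1 + t) = m + 1 + t := fun t => by omega
      rw [e6]
      simp only [e7]
      exact hrec

end Build
section Transfer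

variable {n : ℕ}

/-- The ℕ-level version of a relation on `Fin n`. -/
def natRel (lhd : Fin n → Fin n → Prop) (i j : ℕ) : Prop :=
  ∃ (hi : i < n) (hj : j < n), lhd ⟨i, hi⟩ ⟨j, hj⟩

theorem natRel_refl (lhd : Fin n → Fin n → Prop) (hpo : IsPartialOrder (Fin n) lhd) :
    ∀ i, i < n → natRel lhd i i := fun i h => ⟨h, h, hpo.refl _⟩

theorem natRel_antisymm (lhd : Fin n → Fin n → Prop) (hpo : IsPartialOrder (Fin n) lhd) :
    ∀ i j, natRel lhd i j → natRel lhd j i → i = j := by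
  rintro i j ⟨hi, hj, h1⟩ ⟨_, _, h2⟩
  have := hpo.antisymm _ _ h1 h2
  exact congrArg Fin.val this

theorem natRel_trans (lhd : Fin n → Fin n → Prop) (hpo : IsPartialOrder (Fin n) lhd) :
    ∀ i j k, natRel lhd i j → natRel lhd j k → natRel lhd i k := by
  rintro i j k ⟨hi, hj, h1⟩ ⟨_, hk, h2⟩
  exact ⟨hi, hk, hpo.trans _ _ _ h1 h2⟩

theorem natRel_bdd (lhd : Fin n → Fin n → Prop) :
    ∀ i j, natRel lhd i j → i < n ∧ j < n := by
  rintro i j ⟨hi, hj, -⟩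
  exact ⟨hi, hj⟩

theorem natRel_adapted (lhd : Fin n → Fin n → Prop)
    (hA : AdaptedG (fun a b : Fin n => a ≤ b) lhd) :
    ∀ i j, i ≤ j → j < n → ¬ natRel lhd i j → ¬ natRel lhd j i →
      ∃ k, i ≤ k ∧ k ≤ j ∧ natRel lhd i k ∧ natRel lhd j k := by
  intro i j hij hj h1 h2
  have hi : i < n := lt_of_le_of_lt hij hj
  obtain ⟨k, hk1, hk2, hk3, hk4⟩ := hA ⟨i, hi⟩ ⟨j, hj⟩ hij
    (fun h => h1 ⟨hi, hj, h⟩) (fun h => h2 ⟨hj, hi, h⟩)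
  exact ⟨k.val, hk1, hk2, ⟨hi, k.isLt, hk3⟩, ⟨hj, k.isLt, hk4⟩⟩

theorem dec_iff (lhd : Fin n → Fin n → Prop) (x y : Fin n) :
    DecRelG (fun a b : Fin n => a ≤ b) lhd x y ↔
      (y.val ≤ x.val ∧ ∀ k, y.val ≤ k → k ≤ x.val → natRel lhd k y.val) := by
  constructor
  · rintro ⟨h1, h2⟩
    refine ⟨h1, fun k hk1 hk2 => ?_⟩
    have hk : k < n := lt_of_le_of_lt hk2 x.isLt
    exact ⟨hk, y.isLt, h2 ⟨k, hk⟩ hk1 hk2⟩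
  · rintro ⟨h1, h2⟩
    refine ⟨h1, fun k hk1 hk2 => ?_⟩
    obtain ⟨_, _, h⟩ := h2 k.val hk1 hk2
    exact h

theorem inc_iff (lhd : Fin n → Fin n → Prop) (x y : Fin n) :
    IncRelG (fun a b : Fin n => a ≤ b) lhd x y ↔
      (x.val ≤ y.val ∧ ∀ k, x.val ≤ k → k ≤ y.val → natRel lhd k y.val) := by
  constructor
  · rintro ⟨h1, h2⟩
    refine ⟨h1, fun k hk1 hk2 => ?_⟩
    have hk : k < n := lt_of_le_of_lt hk2 y.isLt
    exact ⟨hk, y.isLt, h2 ⟨k, hk⟩ hk1 hk2⟩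
  · rintro ⟨h1, h2⟩
    refine ⟨h1, fun k hk1 hk2 => ?_⟩
    obtain ⟨_, _, h⟩ := h2 k.val hk1 hk2
    exact h

theorem dec_tree_iff (T : BTree) (hT : T.size = n) (x y : Fin n) :
    DecRelG (fun a b : Fin n => a ≤ b) (fun i j : Fin n => T.rel i.val j.val) x y ↔
      (y.val ≤ x.val ∧ x.val ≤ T.hi y.val) := by
  have hy : y.val < T.size := hT ▸ y.isLt
  constructor
  · rintro ⟨h1, h2⟩
    have h3 : T.rel x.val y.val := h2 x h1 le_rfl
    rw [BTree.rel_iff T _ _ hy] at h3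
    exact ⟨h1, h3.2⟩
  · rintro ⟨h1, h2⟩
    refine ⟨h1, fun k hk1 hk2 => ?_⟩
    show T.rel k.val y.val
    rw [BTree.rel_iff T _ _ hy]
    have := BTree.lo_le T y.val hy
    have hk1' : y.val ≤ k.val := hk1
    have hk2' : k.val ≤ x.val := hk2
    constructor
    · omega
    · omega

theorem inc_tree_iff (T : BTree) (hT : T.size = n) (x y : Fin n) :
    IncRelG (fun a b : Fin n => a ≤ b) (fun i j : Fin n => T.rel i.val j.val) x y ↔
      (x.val ≤ y.val ∧ T.lo y.val ≤ x.val) := by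
  have hy : y.val < T.size := hT ▸ y.isLt
  constructor
  · rintro ⟨h1, h2⟩
    have h3 : T.rel x.val y.val := h2 x le_rfl h1
    rw [BTree.rel_iff T _ _ hy] at h3
    exact ⟨h1, h3.1⟩
  · rintro ⟨h1, h2⟩
    refine ⟨h1, fun k hk1 hk2 => ?_⟩
    show T.rel k.val y.val
    rw [BTree.rel_iff T _ _ hy]
    have := BTree.le_hi T y.val hy
    have hk1' : x.val ≤ k.val := hk1
    have hk2' : k.val ≤ y.val := hk2
    constructor
    · omega
    · omega

/-- The canonical tree of an adapted order. -/
noncomputable def treeOf (lhd : Fin n → Fin n → Prop) : BTree :=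
  build (natRel lhd) 0 n

theorem treeOf_size (lhd : Fin n → Fin n → Prop) : (treeOf lhd).size = n :=
  build_size _ _ _

theorem key (lhd : Fin n → Fin n → Prop) (hpo : IsPartialOrder (Fin n) lhd)
    (hA : AdaptedG (fun a b : Fin n => a ≤ b) lhd) :
    QHEquivG (fun a b : Fin n => a ≤ b) lhd
        (fun i j : Fin n => (treeOf lhd).rel i.val j.val) ∧
      ∀ T : BTree, T.size = n →
        QHEquivG (fun a b : Fin n => a ≤ b) lhd (fun i j : Fin n => T.rel i.val j.val) →
        T = treeOf lhd := by
  have hb := build_spans (natRel_refl lhd hpo) (natRel_antisymm lhd hpo)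
    (natRel_trans lhd hpo) (natRel_bdd lhd) (natRel_adapted lhd hA)
    n 0 (by omega) (fun k hk1 hk2 => ⟨fun h => by omega, fun h => by omega⟩)
  have hspan : ∀ j : Fin n,
      (∀ x : ℕ, (j.val ≤ x ∧ ∀ k, j.val ≤ k → k ≤ x → natRel lhd k j.val) ↔
        (j.val ≤ x ∧ x ≤ (treeOf lhd).hi j.val)) ∧
      (∀ x : ℕ, (x ≤ j.val ∧ ∀ k, x ≤ k → k ≤ j.val → natRel lhd k j.val) ↔
        ((treeOf lhd).lo j.val ≤ x ∧ x ≤ j.val)) := by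
    intro j
    have := hb j.val j.isLt
    simpa only [Nat.zero_add, treeOf] using this
  have hmain : QHEquivG (fun a b : Fin n => a ≤ b) lhd
      (fun i j : Fin n => (treeOf lhd).rel i.val j.val) := by
    constructor
    · intro x y
      rw [dec_iff, dec_tree_iff _ (treeOf_size lhd)]
      exact (hspan y).1 x.val
    · intro x y
      rw [inc_iff, inc_tree_iff _ (treeOf_size lhd)]
      constructor
      · rintro ⟨h1, h2⟩
        exact ⟨h1, (((hspan y).2 x.val).mp ⟨h1, h2⟩).1⟩
      · rintro ⟨h1, h2⟩
        exact ⟨h1, (((hspan y).2 x.val).mpr ⟨h2, h1⟩).2⟩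
  refine ⟨hmain, fun T hT hQ => ?_⟩
  -- uniqueness: spans of T and treeOf lhd agree
  have hQ' : QHEquivG (fun a b : Fin n => a ≤ b)
      (fun i j : Fin n => T.rel i.val j.val)
      (fun i j : Fin n => (treeOf lhd).rel i.val j.val) :=
    ⟨fun x y => ((hQ.1 x y).symm.trans (hmain.1 x y)),
     fun x y => ((hQ.2 x y).symm.trans (hmain.2 x y))⟩
  apply BTree.eq_of_spans T (treeOf lhd) (by rw [hT, treeOf_size])
  intro j hj
  have hjn : j < n := hT ▸ hj
  have hT0 : (treeOf lhd).size = n := treeOf_size lhd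
  have hj0 : j < (treeOf lhd).size := by omega
  have hhiT : T.hi j < n := by have := BTree.hi_lt T j hj; omega
  have hhi0 : (treeOf lhd).hi j < n := by have := BTree.hi_lt (treeOf lhd) j hj0; omega
  have hloT : T.lo j < n := by have := BTree.lo_le T j hj; omega
  have hlo0 : (treeOf lhd).lo j < n := by have := BTree.lo_le (treeOf lhd) j hj0; omega
  constructor
  · -- lo equal
    have h1 := hQ'.2 ⟨T.lo j, hloT⟩ ⟨j, hjn⟩
    rw [inc_tree_iff _ hT, inc_tree_iff _ hT0] at h1
    have h2 := hQ'.2 ⟨(treeOf lhd).lo j, hlo0⟩ ⟨j, hjn⟩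
    rw [inc_tree_iff _ hT, inc_tree_iff _ hT0] at h2
    have a1 : (treeOf lhd).lo j ≤ T.lo j :=
      (h1.mp ⟨BTree.lo_le T j hj, le_rfl⟩).2
    have a2 : T.lo j ≤ (treeOf lhd).lo j :=
      (h2.mpr ⟨BTree.lo_le (treeOf lhd) j hj0, le_rfl⟩).2
    omega
  · -- hi equal
    have h1 := hQ'.1 ⟨T.hi j, hhiT⟩ ⟨j, hjn⟩
    rw [dec_tree_iff _ hT, dec_tree_iff _ hT0] at h1
    have h2 := hQ'.1 ⟨(treeOf lhd).hi j, hhi0⟩ ⟨j, hjn⟩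
    rw [dec_tree_iff _ hT, dec_tree_iff _ hT0] at h2
    have a1 : T.hi j ≤ (treeOf lhd).hi j :=
      (h1.mp ⟨BTree.le_hi T j hj, le_rfl⟩).2
    have a2 : (treeOf lhd).hi j ≤ T.hi j :=
      (h2.mpr ⟨BTree.le_hi (treeOf lhd) j hj0, le_rfl⟩).2
    omega

theorem tree_po (T : BTree) (hT : T.size = n) :
    IsPartialOrder (Fin n) (fun i j : Fin n => T.rel i.val j.val) :=
  { refl := fun a => T.rel_refl a.val (hT ▸ a.isLt)
    trans := fun a b c h1 h2 => T.rel_trans _ _ _ h1 h2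
    antisymm := fun a b h1 h2 => Fin.ext (T.rel_antisymm _ _ h1 h2) }

theorem tree_adapted (T : BTree) (hT : T.size = n) :
    AdaptedG (fun a b : Fin n => a ≤ b) (fun i j : Fin n => T.rel i.val j.val) := by
  intro i j hij h1 h2
  obtain ⟨k, hk1, hk2, hk3, hk4⟩ := T.rel_adapted i.val j.val hij (hT ▸ j.isLt) h1 h2
  have hkn : k < n := lt_of_le_of_lt hk2 j.isLt
  exact ⟨⟨k, hkn⟩, hk1, hk2, hk3, hk4⟩

end Transfer
section Count

/-- Convert a `BTree` to a mathlib `Tree Unit`. -/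
def BTree.toT : BTree → Tree Unit
  | .nil => .nil
  | .node l r => .node () l.toT r.toT

/-- Convert a mathlib `Tree Unit` to a `BTree`. -/
def BTree.ofT : Tree Unit → BTree
  | .nil => .nil
  | .node _ l r => .node (BTree.ofT l) (BTree.ofT r)

theorem BTree.ofT_toT : ∀ T : BTree, BTree.ofT T.toT = T
  | .nil => rfl
  | .node l r => by rw [BTree.toT, BTree.ofT, BTree.ofT_toT l, BTree.ofT_toT r]

theorem BTree.toT_ofT : ∀ t : Tree Unit, (BTree.ofT t).toT = t
  | .nil => rfl
  | .node _ l r => by rw [BTree.ofT, BTree.toT, BTree.toT_ofT l, BTree.toT_ofT r]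

theorem BTree.numNodes_toT : ∀ T : BTree, T.toT.numNodes = T.size
  | .nil => rfl
  | .node l r => by
    simp only [BTree.toT, BinaryTree.numNodes, BTree.size, BTree.numNodes_toT l,
      BTree.numNodes_toT r]
    omega

theorem card_btree (n : ℕ) : Nat.card {T : BTree // T.size = n} = catalan n := by
  have e1 : {T : BTree // T.size = n} ≃ {t : Tree Unit // t.numNodes = n} :=
    { toFun := fun T => ⟨T.1.toT, by rw [BTree.numNodes_toT, T.2]⟩
      invFun := fun t => ⟨BTree.ofT t.1, by
        have := BTree.numNodes_toT (BTree.ofT t.1)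
        rw [BTree.toT_ofT] at this
        rw [← this, t.2]⟩
      left_inv := fun T => Subtype.ext (BTree.ofT_toT T.1)
      right_inv := fun t => Subtype.ext (BTree.toT_ofT t.1) }
  have e2 : {t : Tree Unit // t.numNodes = n} ≃ {t : Tree Unit // t ∈ Tree.treesOfNumNodesEq n} :=
    Equiv.subtypeEquivRight fun t => (BinaryTree.mem_treesOfNumNodesEq).symm
  rw [Nat.card_congr (e1.trans e2), Nat.card_eq_finsetCard,
    BinaryTree.treesOfNumNodesEq_card_eq_catalan]

end Count

/-- `T ↦ [⊲_T]` is a bijection onto equivalence classes of adapted orders to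
`Λₙ`, and the number of quasi-hereditary structures on `Λₙ` is the `n`-th Catalan number. -/
theorem btree_bijection_adapted_orders_and_catalan (n : ℕ) :
    (∀ lhd : Fin n → Fin n → Prop, IsPartialOrder (Fin n) lhd →
      AdaptedG (fun a b : Fin n => a ≤ b) lhd →
      ∃! T : {T : BTree // T.size = n},
        QHEquivG (fun a b : Fin n => a ≤ b) lhd (fun i j => T.1.rel i.val j.val)) ∧
    Nat.card (Quot (fun (l₁ l₂ : {l : Fin n → Fin n → Prop //
        IsPartialOrder (Fin n) l ∧ AdaptedG (fun a b : Fin n => a ≤ b) l}) =>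
      QHEquivG (fun a b : Fin n => a ≤ b) l₁.1 l₂.1)) = catalan n := by
  constructor
  · intro lhd hpo hA
    obtain ⟨hmain, huniq⟩ := key lhd hpo hA
    refine ⟨⟨treeOf lhd, treeOf_size lhd⟩, hmain, ?_⟩
    rintro ⟨T, hT⟩ hQ
    exact Subtype.ext (huniq T hT hQ)
  · set S := {l : Fin n → Fin n → Prop //
      IsPartialOrder (Fin n) l ∧ AdaptedG (fun a b : Fin n => a ≤ b) l} with hS
    set r := fun (l₁ l₂ : S) => QHEquivG (fun a b : Fin n => a ≤ b) l₁.1 l₂.1 with hr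
    have hresp : ∀ l₁ l₂ : S, r l₁ l₂ → treeOf l₁.1 = treeOf l₂.1 := by
      intro l₁ l₂ h
      obtain ⟨hmain₁, _⟩ := key l₁.1 l₁.2.1 l₁.2.2
      obtain ⟨_, huniq₂⟩ := key l₂.1 l₂.2.1 l₂.2.2
      refine huniq₂ (treeOf l₁.1) (treeOf_size l₁.1) ?_
      exact ⟨fun x y => (h.1 x y).symm.trans (hmain₁.1 x y),
             fun x y => (h.2 x y).symm.trans (hmain₁.2 x y)⟩
    have e : Quot r ≃ {T : BTree // T.size = n} :=
      { toFun := Quot.lift (fun l : S => (⟨treeOf l.1, treeOf_size l.1⟩ :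
          {T : BTree // T.size = n})) (fun l₁ l₂ h => Subtype.ext (hresp l₁ l₂ h))
        invFun := fun T => Quot.mk r ⟨fun i j => T.1.rel i.val j.val,
          tree_po T.1 T.2, tree_adapted T.1 T.2⟩
        left_inv := by
          apply Quot.ind
          intro l
          apply Quot.sound
          obtain ⟨hmain, _⟩ := key l.1 l.2.1 l.2.2
          exact ⟨fun x y => (hmain.1 x y).symm, fun x y => (hmain.2 x y).symm⟩
        right_inv := by
          rintro ⟨T, hT⟩
          apply Subtype.ext
          obtain ⟨_, huniq⟩ := key (fun i j : Fin n => T.rel i.val j.val)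
            (tree_po T hT) (tree_adapted T hT)
          exact (huniq T hT ⟨fun x y => Iff.rfl, fun x y => Iff.rfl⟩).symm }
    rw [Nat.card_congr e, card_btree]
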